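/- arXiv:2004.00393 — 5 statements merged into one kernel-verified Lean document; each statement's English description precedes it below -/
import Mathlib

section
/- For all d ≥ 1, n ≥ 1 and λ > 0, e^{-λ 2^d} n^{-λ} ≤ exp(-λ ∫_{1/n}^1 (r + 1/n)^d r^{-d-1} dr) ≤ n^{-λ}. -/
open intervalIntegral Real

lemma aux_convex (d : ℕ) {t : ℝ} (h0 : 0 ≤ t) (h1 : t ≤ 1) :
    (1 + t) ^ d ≤ 1 + (2 ^ d - 1) * t := by
  induction d with
  | zero => simp
  | succ d ih =>
    have h2 : (1:ℝ) ≤ 2 ^ d := one_le_pow₀ (by norm_num)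
    have h3 : (1 + t) ^ d * (1 + t) ≤ (1 + (2 ^ d - 1) * t) * (1 + t) :=
      mul_le_mul_of_nonneg_right ih (by linarith)
    have ht2 : t * t ≤ t := by nlinarith
    rw [pow_succ]
    nlinarith [h3, pow_succ (2:ℝ) d,
      mul_nonneg (by linarith : (0:ℝ) ≤ 2 ^ d - 1) (by linarith : (0:ℝ) ≤ t - t * t)]

/-- `e^{-λ2^d} n^{-λ} ≤ exp(-λ ∫_{1/n}^1 (r+1/n)^d r^{-d-1} dr) ≤ n^{-λ}`. -/
theorem stmt6 (d n : ℕ) (hd : 1 ≤ d) (hn : 1 ≤ n) (lam : ℝ) (hlam : 0 < lam) :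
    Real.exp (-lam * 2 ^ d) * (n:ℝ) ^ (-lam)
      ≤ Real.exp (-lam * ∫ r in (1/(n:ℝ))..1, (r + 1/(n:ℝ)) ^ d / r ^ (d + 1))
    ∧ Real.exp (-lam * ∫ r in (1/(n:ℝ))..1, (r + 1/(n:ℝ)) ^ d / r ^ (d + 1))
      ≤ (n:ℝ) ^ (-lam) := by
  obtain ⟨m, rfl⟩ : ∃ m, d = m + 1 := ⟨d - 1, (Nat.succ_pred_eq_of_pos hd).symm⟩
  set d := m + 1 with hd_def
  set a : ℝ := 1/(n:ℝ) with ha_def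
  set c : ℝ := 2 ^ d - 1 with hc_def
  have hn0 : (0:ℝ) < n := by exact_mod_cast hn
  have ha : 0 < a := by positivity
  have ha1 : a ≤ 1 := by rw [ha_def, div_le_one hn0]; exact_mod_cast hn
  have hc0 : 0 ≤ c := by
    have : (1:ℝ) ≤ 2 ^ d := one_le_pow₀ (by norm_num)
    simp [hc_def]; linarith
  have huIcc : Set.uIcc a 1 = Set.Icc a 1 := Set.uIcc_of_le ha1
  have hmem : ∀ r ∈ Set.Icc a 1, 0 < r := fun r hr => lt_of_lt_of_le ha hr.1
  have hzero : (0:ℝ) ∉ Set.uIcc a 1 := by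
    rw [huIcc]; intro h; exact absurd h.1 (not_le.mpr ha)
  -- integrability facts
  have hint : IntervalIntegrable (fun r : ℝ => (r + a) ^ d / r ^ (d + 1))
      MeasureTheory.volume a 1 := by
    apply ContinuousOn.intervalIntegrable
    rw [huIcc]
    exact ContinuousOn.div (by fun_prop) (by fun_prop)
      (fun r hr => pow_ne_zero _ (ne_of_gt (hmem r hr)))
  have hint1 : IntervalIntegrable (fun r : ℝ => r⁻¹) MeasureTheory.volume a 1 := by
    apply ContinuousOn.intervalIntegrable
    rw [huIcc]
    exact ContinuousOn.inv₀ (by fun_prop) (fun r hr => ne_of_gt (hmem r hr))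
  have hint3 : IntervalIntegrable (fun r : ℝ => c * a * (r:ℝ) ^ (-2 : ℤ))
      MeasureTheory.volume a 1 := by
    apply ContinuousOn.intervalIntegrable
    rw [huIcc]
    apply ContinuousOn.mul continuousOn_const
    have heq : (fun r : ℝ => r ^ (-2 : ℤ)) = fun r : ℝ => (r ^ 2)⁻¹ := by
      ext r; rw [zpow_neg, zpow_two, sq]
    rw [heq]
    exact ContinuousOn.inv₀ (by fun_prop) (fun r hr => pow_ne_zero _ (ne_of_gt (hmem r hr)))
  -- value of ∫ r⁻¹
  have hlog : (∫ r in a..1, r⁻¹) = Real.log n := by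
    rw [integral_inv hzero, ha_def, one_div_one_div]
  -- lower bound on the integral
  have hlow : Real.log n ≤ ∫ r in a..1, (r + a) ^ d / r ^ (d + 1) := by
    rw [← hlog]
    apply integral_mono_on ha1 hint1 hint
    intro r hr
    have hr0 := hmem r hr
    rw [inv_eq_one_div, div_le_div_iff₀ hr0 (by positivity), one_mul, pow_succ]
    have h1 : r ^ d ≤ (r + a) ^ d := pow_le_pow_left₀ (le_of_lt hr0) (by linarith) d
    nlinarith
  -- upper bound on the integral
  have hup : (∫ r in a..1, (r + a) ^ d / r ^ (d + 1)) ≤ Real.log n + 2 ^ d := by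
    have hmono : (∫ r in a..1, (r + a) ^ d / r ^ (d + 1))
        ≤ ∫ r in a..1, (r⁻¹ + c * a * (r:ℝ) ^ (-2 : ℤ)) := by
      apply integral_mono_on ha1 hint (hint1.add hint3)
      intro r hr
      have hr0 := hmem r hr
      have hrne : r ≠ 0 := ne_of_gt hr0
      have ht0 : 0 ≤ a / r := by positivity
      have ht1 : a / r ≤ 1 := by rw [div_le_one hr0]; exact hr.1
      have hkey := aux_convex d ht0 ht1
      -- (r+a)^d ≤ r^d + c*a*r^m
      have hmul := mul_le_mul_of_nonneg_right hkey (le_of_lt (pow_pos hr0 d))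
      have hL : (1 + a / r) ^ d * r ^ d = (r + a) ^ d := by
        rw [← mul_pow]; congr 1; field_simp
      have hR : (1 + c * (a / r)) * r ^ d = r ^ d + c * a * r ^ m := by
        rw [hd_def]; field_simp; ring
      rw [hL, hR] at hmul
      rw [div_le_iff₀ (pow_pos hr0 (d+1)), zpow_neg]
      have hRHS : (r⁻¹ + c * a * ((r:ℝ) ^ (2:ℤ))⁻¹) * r ^ (d + 1)
          = r ^ d + c * a * r ^ m := by
        rw [hd_def]
        have : ((r:ℝ) ^ (2:ℤ)) = r ^ 2 := by rw [zpow_two, sq]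
        rw [this]; field_simp; ring
      rw [hRHS]; exact hmul
    have hcalc : (∫ r in a..1, (r⁻¹ + c * a * (r:ℝ) ^ (-2 : ℤ)))
        = Real.log n + c * a * (a⁻¹ - 1) := by
      rw [integral_add hint1 hint3, hlog, integral_const_mul,
        integral_zpow (Or.inr ⟨by norm_num, hzero⟩)]
      norm_num
      exact Or.inl (by ring)
    have h4 := hmono.trans_eq hcalc
    have hane : a ≠ 0 := ne_of_gt ha
    have heq2 : c * a * (a⁻¹ - 1) = c * (1 - a) := by field_simp
    rw [heq2] at h4
    nlinarith [h4, hc0, ha, ha1]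
  -- conclude
  have hIeq : (∫ r in (1/(n:ℝ))..1, (r + 1/(n:ℝ)) ^ d / r ^ (d + 1))
      = ∫ r in a..1, (r + a) ^ d / r ^ (d + 1) := rfl
  have hrpow : (n:ℝ) ^ (-lam) = Real.exp (-lam * Real.log n) := by
    rw [Real.rpow_def_of_pos hn0, mul_comm]
  constructor
  · rw [hIeq, hrpow, ← Real.exp_add]
    apply Real.exp_le_exp.mpr
    nlinarith
  · rw [hIeq, hrpow]
    apply Real.exp_le_exp.mpr
    nlinarith
end

section
/- Let d ≥ 1, n ≥ 1, and let k be an integer with 2 ≤ k ≤ n. Then ∫_{(k-1)/n}^{1} (r + 1/n)^d r^{-d-1} dr ≤ -log((k-1)/n) + 2^d. -/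
open intervalIntegral in
lemma aux_pow (r ε : ℝ) (hε : 0 ≤ ε) (hr : ε ≤ r) :
    ∀ d : ℕ, 1 ≤ d → (r + ε) ^ d ≤ r ^ d + (2 ^ d - 1) * ε * r ^ (d - 1) := by
  intro d hd
  induction d, hd using Nat.le_induction with
  | base => simp; nlinarith
  | succ d hd ih =>
    have hr0 : 0 ≤ r := hε.trans hr
    have key : r ^ (d - 1) * r = r ^ d := by
      rw [← pow_succ]; congr 1; omega
    have h2 : (1:ℝ) ≤ 2 ^ d := one_le_pow₀ (by norm_num)
    have hrp : 0 ≤ r ^ (d-1) := pow_nonneg hr0 _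
    have hnn : 0 ≤ r + ε := by linarith
    have hεr : ε * ε * r ^ (d-1) ≤ ε * r ^ d := by
      rw [← key]
      have := mul_le_mul_of_nonneg_left hr (mul_nonneg hε hrp)
      nlinarith
    have hsub : (d + 1) - 1 = d := by omega
    rw [hsub]
    have expand : (r ^ d + (2^d-1)*ε*r^(d-1)) * (r + ε)
        = r^d*r + ε*r^d + (2^d-1)*ε*(r^(d-1)*r) + (2^d-1)*(ε*ε*r^(d-1)) := by ring
    rw [key] at expand
    calc (r + ε) ^ (d+1) = (r + ε) ^ d * (r + ε) := pow_succ _ _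
      _ ≤ (r ^ d + (2^d-1)*ε*r^(d-1)) * (r + ε) := mul_le_mul_of_nonneg_right ih hnn
      _ = r^d*r + ε*r^d + (2^d-1)*(ε*r^d) + (2^d-1)*(ε*ε*r^(d-1)) := by rw [expand]; ring
      _ ≤ r^d*r + ε*r^d + (2^d-1)*(ε*r^d) + (2^d-1)*(ε*r^d) :=
          add_le_add (le_refl _) (mul_le_mul_of_nonneg_left hεr (by linarith))
      _ = r^(d+1) + (2^(d+1) - 1) * ε * r^d := by rw [pow_succ, pow_succ]; ring

/-- For `2 ≤ k ≤ n`: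
`∫_{(k-1)/n}^1 (r+1/n)^d r^{-d-1} dr ≤ -log((k-1)/n) + 2^d`. -/
theorem stmt8 (d n k : ℕ) (hd : 1 ≤ d) (hk : 2 ≤ k) (hkn : k ≤ n) :
    ∫ r in (((k:ℝ) - 1)/(n:ℝ))..1, (r + 1/(n:ℝ)) ^ d / r ^ (d + 1)
      ≤ -Real.log (((k:ℝ) - 1)/(n:ℝ)) + 2 ^ d := by
  obtain ⟨m, rfl⟩ : ∃ m, d = m + 1 := ⟨d - 1, by omega⟩
  set a : ℝ := ((k:ℝ) - 1)/(n:ℝ) with ha_def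
  have hn0 : (0:ℝ) < n := by
    have : 2 ≤ n := hk.trans hkn
    exact_mod_cast Nat.lt_of_lt_of_le (by norm_num) this
  have hk1 : (1:ℝ) ≤ (k:ℝ) - 1 := by
    have : (2:ℝ) ≤ k := by exact_mod_cast hk
    linarith
  have hkn' : (k:ℝ) - 1 ≤ n := by
    have : (k:ℝ) ≤ n := by exact_mod_cast hkn
    linarith
  have ha0 : 0 < a := div_pos (by linarith) hn0
  have ha1 : a ≤ 1 := (div_le_one hn0).2 hkn'
  have hεa : 1/(n:ℝ) ≤ a := by
    rw [ha_def, div_le_div_iff₀ hn0 hn0]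
    nlinarith
  set c : ℝ := 2 ^ (m+1) - 1 with hc_def
  have hc0 : 0 ≤ c := by
    have : (1:ℝ) ≤ 2 ^ (m+1) := one_le_pow₀ (by norm_num)
    linarith
  set g : ℝ → ℝ := fun r => 1/r + (c * (n:ℝ)⁻¹) * r ^ (-2:ℤ) with hg_def
  have h0uIcc : (0:ℝ) ∉ Set.uIcc a 1 := by
    rw [Set.uIcc_of_le ha1]
    exact fun h => absurd h.1 (not_le.2 ha0)
  have hpos : ∀ x ∈ Set.uIcc a 1, 0 < x := by
    rw [Set.uIcc_of_le ha1]
    exact fun x hx => lt_of_lt_of_le ha0 hx.1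
  -- integrability
  have hf_int : IntervalIntegrable (fun r => (r + 1/(n:ℝ)) ^ (m+1) / r ^ (m+1+1)) MeasureTheory.volume a 1 := by
    apply ContinuousOn.intervalIntegrable
    exact ContinuousOn.div (by fun_prop) (by fun_prop)
      (fun x hx => pow_ne_zero _ (hpos x hx).ne')
  have hg1_int : IntervalIntegrable (fun r : ℝ => 1/r) MeasureTheory.volume a 1 := by
    apply ContinuousOn.intervalIntegrable
    exact ContinuousOn.div continuousOn_const continuousOn_id (fun x hx => (hpos x hx).ne')
  have hg2_int : IntervalIntegrable (fun r : ℝ => (c * (n:ℝ)⁻¹) * r ^ (-2:ℤ)) MeasureTheory.volume a 1 := by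
    apply ContinuousOn.intervalIntegrable
    exact continuousOn_const.mul ((continuousOn_id.zpow₀ _) (fun x hx => Or.inl (hpos x hx).ne'))
  have hg_int : IntervalIntegrable g MeasureTheory.volume a 1 := hg1_int.add hg2_int
  -- pointwise bound
  have hpt : ∀ x ∈ Set.Icc a 1, (x + 1/(n:ℝ)) ^ (m+1) / x ^ (m+1+1) ≤ g x := by
    intro x hx
    have hx0 : 0 < x := lt_of_lt_of_le ha0 hx.1
    have hεx : 1/(n:ℝ) ≤ x := hεa.trans hx.1
    have hε0 : 0 ≤ 1/(n:ℝ) := by positivity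
    have hnum := aux_pow x (1/(n:ℝ)) hε0 hεx (m+1) (by omega)
    simp only [Nat.add_sub_cancel] at hnum
    have hden : (0:ℝ) < x ^ (m+1+1) := by positivity
    have h1 : (x + 1/(n:ℝ)) ^ (m+1) / x ^ (m+1+1)
        ≤ (x ^ (m+1) + (2 ^ (m+1) - 1) * (1/(n:ℝ)) * x ^ m) / x ^ (m+1+1) :=
      div_le_div_of_nonneg_right hnum hden.le
    refine h1.trans (le_of_eq ?_)
    have hx2 : x ^ (-2:ℤ) = 1 / x ^ 2 := by
      rw [zpow_neg, one_div]
      norm_cast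
    rw [hg_def]
    simp only [hx2]
    field_simp
    ring_nf
    rw [hc_def]; ring
  -- bound by integral of g
  have hmono := intervalIntegral.integral_mono_on ha1 hf_int hg_int hpt
  refine hmono.trans ?_
  -- compute integral of g
  have hI1 : ∫ r in a..1, 1/r = Real.log (1/a) := integral_one_div h0uIcc
  have hI2 : ∫ r in a..1, (c * (n:ℝ)⁻¹) * r ^ (-2:ℤ)
      = c * (n:ℝ)⁻¹ * (a⁻¹ - 1) := by
    rw [intervalIntegral.integral_const_mul, integral_zpow (Or.inr ⟨by norm_num, h0uIcc⟩)]
    have h : ((-2:ℤ) + 1) = -1 := by norm_num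
    rw [h]
    simp only [zpow_neg_one, one_zpow]
    push_cast
    ring
  have hIg : ∫ r in a..1, g r = Real.log (1/a) + c * (n:ℝ)⁻¹ * (a⁻¹ - 1) := by
    rw [hg_def, intervalIntegral.integral_add hg1_int hg2_int, hI1, hI2]
  rw [hIg, one_div, Real.log_inv]
  have hainv : a⁻¹ ≤ n := by
    rw [ha_def, inv_div]
    exact div_le_self hn0.le hk1
  have hainv0 : 0 < a⁻¹ := inv_pos.2 ha0
  have hcle : c ≤ 2 ^ (m+1) := by rw [hc_def]; linarith
  have hkey : c * (n:ℝ)⁻¹ * (a⁻¹ - 1) ≤ 2 ^ (m+1) := by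
    have h1 : c * (n:ℝ)⁻¹ * (a⁻¹ - 1) = c * ((n:ℝ)⁻¹ * (a⁻¹ - 1)) := by ring
    rw [h1]
    have hn' : (0:ℝ) ≤ (n:ℝ)⁻¹ := by positivity
    have h2 : (n:ℝ)⁻¹ * (a⁻¹ - 1) ≤ (n:ℝ)⁻¹ * n := by
      apply mul_le_mul_of_nonneg_left _ hn'
      linarith
    rw [inv_mul_cancel₀ hn0.ne'] at h2
    calc c * ((n:ℝ)⁻¹ * (a⁻¹ - 1)) ≤ c * 1 := mul_le_mul_of_nonneg_left h2 hc0
      _ = c := mul_one c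
      _ ≤ 2 ^ (m+1) := hcle
  linarith
end

section
/- For all d ≥ 1 and n ≥ 1, ∫_{1/n}^1 (r - 1/n)^d r^{-d-1} dr = log n + Σ_{k=0}^{d-1} C(d,k) (-n)^{k-d} (n^{d-k} - 1)/(d-k), and this quantity is at least log n - 2^d. -/
open Finset

/-- `∫_{1/n}^1 (r-1/n)^d r^{-d-1} dr
  = log n + Σ_{k=0}^{d-1} C(d,k) (-n)^{k-d} (n^{d-k}-1)/(d-k)`, and this is
at least `log n - 2^d`. -/
theorem stmt14 (d n : ℕ) (hd : 1 ≤ d) (hn : 1 ≤ n) :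
    (∫ r in (1/(n:ℝ))..1, (r - 1/(n:ℝ)) ^ d / r ^ (d + 1)
      = Real.log n + ∑ k ∈ range d,
          (d.choose k : ℝ) * (-(n:ℝ)) ^ ((k:ℤ) - (d:ℤ)) *
            (((n:ℝ) ^ ((d:ℤ) - (k:ℤ)) - 1) / ((d:ℝ) - (k:ℝ))))
    ∧ Real.log n - 2 ^ d
        ≤ ∫ r in (1/(n:ℝ))..1, (r - 1/(n:ℝ)) ^ d / r ^ (d + 1) := by
  have hn0 : (0:ℝ) < n := by exact_mod_cast hn
  set a : ℝ := 1/(n:ℝ) with ha_def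
  have ha0 : 0 < a := by positivity
  have ha1 : a ≤ 1 := by rw [ha_def, div_le_one hn0]; exact_mod_cast hn
  set F : ℝ → ℝ := fun r => Real.log r +
      ∑ k ∈ range d, (d.choose k : ℝ) * (-a)^(d-k) * r ^ ((k:ℤ)-(d:ℤ)) / ((k:ℝ)-(d:ℝ))
    with hF
  have hderiv : ∀ x ∈ Set.uIcc a 1, HasDerivAt F ((x - a)^d / x^(d+1)) x := by
    intro x hx
    rw [Set.uIcc_of_le ha1] at hx
    have hx0 : 0 < x := lt_of_lt_of_le ha0 hx.1
    have hxne : x ≠ 0 := ne_of_gt hx0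
    have h1 : HasDerivAt F
        (x⁻¹ + ∑ k ∈ range d, (d.choose k : ℝ) * (-a)^(d-k) * x ^ ((k:ℤ)-(d:ℤ)-1)) x := by
      apply HasDerivAt.add (Real.hasDerivAt_log hxne)
      apply HasDerivAt.fun_sum
      intro k hk
      have hkd : k < d := mem_range.mp hk
      have hne : (k:ℝ) - (d:ℝ) ≠ 0 := by
        have : (k:ℝ) < d := by exact_mod_cast hkd
        linarith
      have h := ((hasDerivAt_zpow ((k:ℤ)-(d:ℤ)) x (Or.inl hxne)).const_mul
        ((d.choose k : ℝ) * (-a)^(d-k))).div_const ((k:ℝ)-(d:ℝ))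
      refine h.congr_deriv (Eq.symm ?_)
      have hcast : (((k:ℤ)-(d:ℤ) : ℤ) : ℝ) = (k:ℝ) - (d:ℝ) := by push_cast; ring
      rw [hcast]
      field_simp
    convert h1 using 1
    have hexp : (x - a)^d = ∑ k ∈ range (d+1), x^k * (-a)^(d-k) * (d.choose k : ℝ) := by
      rw [sub_eq_add_neg, add_pow]
    have key : ∀ k ∈ range (d+1),
        x^k * (-a)^(d-k) * (d.choose k:ℝ) / x^(d+1)
          = (d.choose k:ℝ) * (-a)^(d-k) * x^((k:ℤ)-(d:ℤ)-1) := by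
      intro k hk
      have hz : x ^ ((k:ℤ)-(d:ℤ)-1) = x^(k:ℕ) / x^(d+1:ℕ) := by
        rw [← zpow_natCast x k, ← zpow_natCast x (d+1), ← zpow_sub₀ hxne]
        congr 1
        push_cast
        ring
      rw [hz]
      ring
    rw [hexp, Finset.sum_div, Finset.sum_congr rfl key, Finset.sum_range_succ]
    simp [zpow_sub_one₀ hxne]
    ring
  have hint : IntervalIntegrable (fun r => (r - a)^d / r^(d+1)) MeasureTheory.volume a 1 := by
    apply ContinuousOn.intervalIntegrable
    apply ContinuousOn.div
    · fun_prop
    · fun_prop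
    · intro x hx
      rw [Set.uIcc_of_le ha1] at hx
      have hx0 : 0 < x := lt_of_lt_of_le ha0 hx.1
      positivity
  have eq1 : (∫ r in a..1, (r - a)^d / r^(d+1)) = F 1 - F a :=
    intervalIntegral.integral_eq_sub_of_hasDerivAt hderiv hint
  have hFval : F 1 - F a = Real.log n + ∑ k ∈ range d,
      (d.choose k : ℝ) * (-(n:ℝ)) ^ ((k:ℤ) - (d:ℤ)) *
        (((n:ℝ) ^ ((d:ℤ) - (k:ℤ)) - 1) / ((d:ℝ) - (k:ℝ))) := by
    rw [hF]
    simp only [Real.log_one, one_zpow]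
    rw [ha_def, one_div, Real.log_inv]
    rw [add_sub_add_comm, ← Finset.sum_sub_distrib]
    congr 1
    · ring
    apply Finset.sum_congr rfl
    intro k hk
    have hkd : k < d := mem_range.mp hk
    have hne : (d:ℝ) - (k:ℝ) ≠ 0 := by
      have : (k:ℝ) < d := by exact_mod_cast hkd
      linarith
    have hnne : (n:ℝ) ≠ 0 := ne_of_gt hn0
    have hnnne : (-(n:ℝ)) ≠ 0 := by simpa using hnne
    have e1 : (-(n:ℝ)⁻¹)^(d-k) = (-(n:ℝ)) ^ ((k:ℤ) - (d:ℤ)) := by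
      have : (-(n:ℝ)⁻¹) = (-(n:ℝ))⁻¹ := by ring
      rw [this, inv_pow, ← zpow_natCast (-(n:ℝ)) (d-k), ← zpow_neg]
      congr 1
      have : ((d - k : ℕ) : ℤ) = (d:ℤ) - k := by
        omega
      rw [this]; ring
    have e2 : ((n:ℝ)⁻¹) ^ ((k:ℤ)-(d:ℤ)) = (n:ℝ) ^ ((d:ℤ) - (k:ℤ)) := by
      rw [inv_zpow, ← zpow_neg]
      congr 1; ring
    rw [e1, e2]
    have hne2 : (k:ℝ) - (d:ℝ) ≠ 0 := fun h => hne (by linarith [sub_eq_zero.mp h])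
    set C := (d.choose k : ℝ)
    set N := (-(n:ℝ)) ^ ((k:ℤ) - (d:ℤ))
    set M := (n:ℝ) ^ ((d:ℤ) - (k:ℤ))
    field_simp
    ring
  constructor
  · rw [eq1, hFval]
  · rw [eq1, hFval]
    have hbound : ∀ k ∈ range d,
        -(d.choose k : ℝ) ≤ (d.choose k : ℝ) * (-(n:ℝ)) ^ ((k:ℤ) - (d:ℤ)) *
          (((n:ℝ) ^ ((d:ℤ) - (k:ℤ)) - 1) / ((d:ℝ) - (k:ℝ))) := by
      intro k hk
      have hkd : k < d := mem_range.mp hk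
      have hdk1 : (1:ℝ) ≤ (d:ℝ) - (k:ℝ) := by
        have : (k:ℝ) + 1 ≤ d := by exact_mod_cast hkd
        linarith
      have hn1 : (1:ℝ) ≤ (n:ℝ) := by exact_mod_cast hn
      set t := (d.choose k : ℝ) * (-(n:ℝ)) ^ ((k:ℤ) - (d:ℤ)) *
          (((n:ℝ) ^ ((d:ℤ) - (k:ℤ)) - 1) / ((d:ℝ) - (k:ℝ))) with ht
      have habs : |t| ≤ (d.choose k : ℝ) := by
        rw [ht, abs_mul, abs_mul]
        have h1 : |(d.choose k : ℝ)| = (d.choose k : ℝ) := abs_of_nonneg (by positivity)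
        have h2 : |(-(n:ℝ)) ^ ((k:ℤ) - (d:ℤ))| = (n:ℝ) ^ ((k:ℤ) - (d:ℤ)) := by
          rw [show ((k:ℤ)-(d:ℤ)) = -((d-k:ℕ):ℤ) by omega]
          rw [zpow_neg, zpow_natCast, zpow_neg, zpow_natCast, abs_inv, abs_pow, abs_neg,
            abs_of_pos hn0]
        have hM1 : (1:ℝ) ≤ (n:ℝ) ^ ((d:ℤ) - (k:ℤ)) := by
          apply one_le_zpow₀ hn1
          omega
        have h3 : |((n:ℝ) ^ ((d:ℤ) - (k:ℤ)) - 1) / ((d:ℝ) - (k:ℝ))|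
            = ((n:ℝ) ^ ((d:ℤ) - (k:ℤ)) - 1) / ((d:ℝ) - (k:ℝ)) := by
          apply abs_of_nonneg
          apply div_nonneg (by linarith) (by linarith)
        rw [h1, h2, h3]
        have hprod : (n:ℝ) ^ ((k:ℤ) - (d:ℤ)) * (((n:ℝ) ^ ((d:ℤ) - (k:ℤ)) - 1) / ((d:ℝ) - (k:ℝ))) ≤ 1 := by
          have hmulinv : (n:ℝ) ^ ((k:ℤ) - (d:ℤ)) * (n:ℝ) ^ ((d:ℤ) - (k:ℤ)) = 1 := by
            rw [← zpow_add₀ (ne_of_gt hn0)]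
            norm_num
          have hpos : (0:ℝ) < (n:ℝ) ^ ((k:ℤ) - (d:ℤ)) := zpow_pos hn0 _
          have key : (n:ℝ)^((k:ℤ)-(d:ℤ)) * ((n:ℝ)^((d:ℤ)-(k:ℤ)) - 1)
              = 1 - (n:ℝ)^((k:ℤ)-(d:ℤ)) := by
            rw [mul_sub, hmulinv, mul_one]
          rw [mul_div_assoc', key]
          apply div_le_one_of_le₀ (by linarith) (by linarith)
        calc (d.choose k : ℝ) * (n:ℝ) ^ ((k:ℤ) - (d:ℤ)) * (((n:ℝ) ^ ((d:ℤ) - (k:ℤ)) - 1) / ((d:ℝ) - (k:ℝ)))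
            = (d.choose k : ℝ) * ((n:ℝ) ^ ((k:ℤ) - (d:ℤ)) * (((n:ℝ) ^ ((d:ℤ) - (k:ℤ)) - 1) / ((d:ℝ) - (k:ℝ)))) := by ring
          _ ≤ (d.choose k : ℝ) * 1 := by
              apply mul_le_mul_of_nonneg_left hprod (by positivity)
          _ = (d.choose k : ℝ) := mul_one _
      linarith [neg_abs_le t, habs]
    have hsum : -(2^d : ℝ) ≤ ∑ k ∈ range d,
        (d.choose k : ℝ) * (-(n:ℝ)) ^ ((k:ℤ) - (d:ℤ)) *
          (((n:ℝ) ^ ((d:ℤ) - (k:ℤ)) - 1) / ((d:ℝ) - (k:ℝ))) := by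
      calc -(2^d : ℝ) ≤ -(∑ k ∈ range d, (d.choose k : ℝ)) := by
            rw [neg_le_neg_iff]
            have h1 : (∑ k ∈ range d, (d.choose k : ℕ)) ≤ 2^d := by
              calc (∑ k ∈ range d, (d.choose k : ℕ)) ≤ ∑ k ∈ range (d+1), d.choose k :=
                    Finset.sum_le_sum_of_subset (by simp [Finset.range_subset]; intro x hx; omega)
                _ = 2^d := Nat.sum_range_choose d
            calc (∑ k ∈ range d, (d.choose k : ℝ)) = ((∑ k ∈ range d, d.choose k : ℕ) : ℝ) := by
                  push_cast; ring
              _ ≤ ((2^d : ℕ) : ℝ) := by exact_mod_cast h1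
              _ = (2^d : ℝ) := by push_cast; ring
        _ = ∑ k ∈ range d, -(d.choose k : ℝ) := by rw [Finset.sum_neg_distrib]
        _ ≤ _ := Finset.sum_le_sum hbound
    linarith
end

section
/- For all d ≥ 1, n ≥ 1 and λ > 0, n^d · exp(-λ ∫_{1/n}^1 (r - 1/n)^d r^{-d-1} dr) ≤ n^{d-λ} e^{λ 2^d}. In particular, if λ ≥ d, then this quantity is bounded above by e^{λ 2^d} uniformly in n. -/
theorem aux_int (d n : ℕ) (hd : 1 ≤ d) (hn : 1 ≤ n) :
    Real.log n - 2 ^ d ≤ ∫ r in (1/(n:ℝ))..1, (r - 1/(n:ℝ)) ^ d / r ^ (d + 1) := by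
  set a : ℝ := 1/(n:ℝ) with ha
  have hn0 : (0:ℝ) < n := by positivity
  have ha0 : 0 < a := by positivity
  have ha1 : a ≤ 1 := by
    rw [ha, div_le_one hn0]; exact_mod_cast hn
  have hsub : Set.uIcc a 1 ⊆ {r : ℝ | 0 < r} := by
    rw [Set.uIcc_of_le ha1]
    intro x hx; exact lt_of_lt_of_le ha0 hx.1
  have hcf : IntervalIntegrable (fun r => (r - a) ^ d / r ^ (d+1)) MeasureTheory.volume a 1 := by
    apply ContinuousOn.intervalIntegrable
    apply ContinuousOn.div (by fun_prop) (by fun_prop)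
    intro x hx
    exact pow_ne_zero _ (hsub hx).ne'
  have hc1 : IntervalIntegrable (fun r : ℝ => 1/r) MeasureTheory.volume a 1 := by
    apply ContinuousOn.intervalIntegrable
    apply ContinuousOn.div (by fun_prop) (by fun_prop)
    intro x hx; exact (hsub hx).ne'
  have hc2 : IntervalIntegrable (fun r : ℝ => (d:ℝ) * a * r ^ (-2 : ℤ)) MeasureTheory.volume a 1 := by
    apply ContinuousOn.intervalIntegrable
    apply ContinuousOn.mul (by fun_prop)
    apply ContinuousOn.zpow₀ (by fun_prop)
    intro x hx; exact Or.inl (hsub hx).ne'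
  have hmono : (∫ r in a..1, (1/r - (d:ℝ) * a * r ^ (-2 : ℤ)))
      ≤ ∫ r in a..1, (r - a) ^ d / r ^ (d+1) := by
    apply intervalIntegral.integral_mono_on ha1 (hc1.sub hc2) hcf
    intro r hr
    have hr0 : 0 < r := lt_of_lt_of_le ha0 hr.1
    have har : a ≤ r := hr.1
    have hber : 1 + (d:ℝ) * (-(a/r)) ≤ (1 + (-(a/r))) ^ d := by
      apply one_add_mul_le_pow
      have : a / r ≤ 1 := by rw [div_le_one hr0]; exact har
      linarith
    have h1 : (1 + (-(a/r))) = (r - a)/r := by field_simp; ring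
    rw [h1, div_pow] at hber
    have e1 : 1/r - (d:ℝ) * a * r ^ (-2 : ℤ) = (1 + (d:ℝ) * (-(a/r)))/r := by
      have : r ^ (-2 : ℤ) = (r^2)⁻¹ := by
        rw [zpow_neg]; norm_cast
      rw [this]; field_simp; ring
    have e2 : (r - a) ^ d / r ^ (d+1) = ((r-a)^d / r^d) / r := by
      rw [pow_succ, div_div]
    rw [e1, e2]
    gcongr
  have hint : (∫ r in a..1, (1/r - (d:ℝ) * a * r ^ (-2 : ℤ)))
      = Real.log n - (d:ℝ) * (1 - a) := by
    rw [intervalIntegral.integral_sub hc1 hc2, integral_one_div,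
      intervalIntegral.integral_const_mul, integral_zpow]
    · have hna : (1:ℝ)/a = n := by rw [ha]; field_simp
      rw [hna]
      have han : a * (n:ℝ) = 1 := by rw [ha]; field_simp
      have : a⁻¹ = (n:ℝ) := by rw [ha]; simp
      norm_num [this]
      field_simp
      linear_combination (mul_inv_cancel₀ hn0.ne')
    · right
      constructor
      · norm_num
      · intro hx
        have := hsub hx; simp at this
    · intro hx
      have := hsub hx; simp at this
  have hd2 : (d:ℝ) ≤ 2 ^ d := by
    exact_mod_cast (@Nat.lt_two_pow_self d).le
  have : (d:ℝ) * (1 - a) ≤ 2 ^ d := by nlinarith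
  linarith [hmono, hint ▸ hmono]

/-- `n^d exp(-λ ∫_{1/n}^1 (r-1/n)^d r^{-d-1} dr) ≤ n^{d-λ} e^{λ2^d}`;
in particular if `λ ≥ d` this is at most `e^{λ2^d}`. -/
theorem stmt15 (d n : ℕ) (hd : 1 ≤ d) (hn : 1 ≤ n) (lam : ℝ) (hlam : 0 < lam) :
    (n:ℝ) ^ d *
        Real.exp (-lam * ∫ r in (1/(n:ℝ))..1, (r - 1/(n:ℝ)) ^ d / r ^ (d + 1))
      ≤ (n:ℝ) ^ ((d:ℝ) - lam) * Real.exp (lam * 2 ^ d)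
    ∧ ((d:ℝ) ≤ lam →
        (n:ℝ) ^ d *
            Real.exp (-lam * ∫ r in (1/(n:ℝ))..1, (r - 1/(n:ℝ)) ^ d / r ^ (d + 1))
          ≤ Real.exp (lam * 2 ^ d)) := by
  have hn0 : (0:ℝ) < n := by positivity
  have hn1 : (1:ℝ) ≤ n := by exact_mod_cast hn
  have hI := aux_int d n hd hn
  set I := ∫ r in (1/(n:ℝ))..1, (r - 1/(n:ℝ)) ^ d / r ^ (d + 1) with hIdef
  have key : (n:ℝ) ^ d * Real.exp (-lam * I)
      ≤ (n:ℝ) ^ ((d:ℝ) - lam) * Real.exp (lam * 2 ^ d) := by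
    have h1 : Real.exp (-lam * I) ≤ Real.exp (-lam * (Real.log n - 2^d)) := by
      apply Real.exp_le_exp.mpr
      nlinarith
    have h2 : Real.exp (-lam * (Real.log n - 2^d))
        = (n:ℝ) ^ (-lam) * Real.exp (lam * 2^d) := by
      rw [Real.rpow_def_of_pos hn0, ← Real.exp_add]
      ring_nf
    have h3 : (n:ℝ) ^ d * ((n:ℝ) ^ (-lam) * Real.exp (lam * 2^d))
        = (n:ℝ) ^ ((d:ℝ) - lam) * Real.exp (lam * 2 ^ d) := by
      rw [← Real.rpow_natCast (n:ℝ) d, ← mul_assoc, ← Real.rpow_add hn0, sub_eq_add_neg]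
    calc (n:ℝ) ^ d * Real.exp (-lam * I)
        ≤ (n:ℝ) ^ d * Real.exp (-lam * (Real.log n - 2^d)) := by
          apply mul_le_mul_of_nonneg_left h1; positivity
      _ = (n:ℝ) ^ ((d:ℝ) - lam) * Real.exp (lam * 2 ^ d) := by rw [h2, h3]
  refine ⟨key, fun hdl => key.trans ?_⟩
  have : (n:ℝ) ^ ((d:ℝ) - lam) ≤ 1 :=
    Real.rpow_le_one_of_one_le_of_nonpos hn1 (by linarith)
  nlinarith [Real.exp_pos (lam * 2^d)]
end

section
/- For d ≥ 1 and n > √d/2, ∫_{√d/(2n)}^{1} v_d (r - √d/(2n))^d r^{-d-1} dr = v_d ∫_{1/n}^{2/√d} (s - 1/n)^d s^{-d-1} ds, and there is a constant C = C(d) such that exp(-λ v_d ∫_{1/n}^{2/√d} (s-1/n)^d s^{-d-1} ds) ≤ C n^{-λ v_d} for every λ > 0 (with C depending also on λ). -/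
open MeasureTheory

/-- Lower bound `log n - (d - log(2/√d)) ≤ ∫_{1/n}^{2/√d} (s-1/n)^d s^{-(d+1)} ds`. -/
lemma stmt16_aux_lower (d : ℕ) (hd : 1 ≤ d) (n : ℕ) (hn : Real.sqrt d / 2 < (n:ℝ)) :
    Real.log n - ((d:ℝ) - Real.log (2 / Real.sqrt d))
      ≤ ∫ s in (1/(n:ℝ))..(2 / Real.sqrt d), (s - 1/(n:ℝ)) ^ d / s ^ (d + 1) := by
  have hd1 : (1:ℝ) ≤ Real.sqrt d := by
    rw [show (1:ℝ) = Real.sqrt 1 by simp]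
    exact Real.sqrt_le_sqrt (by exact_mod_cast hd)
  have hds : (0:ℝ) < Real.sqrt d := lt_of_lt_of_le one_pos hd1
  have hn0 : (0:ℝ) < n := lt_of_le_of_lt (by positivity) hn
  set a : ℝ := 1/(n:ℝ) with ha
  set b : ℝ := 2 / Real.sqrt d with hb
  have ha0 : 0 < a := by positivity
  have hb0 : 0 < b := by positivity
  have hab : a ≤ b := by
    rw [ha, hb, div_le_div_iff₀ hn0 hds]
    nlinarith
  have h0mem : (0:ℝ) ∉ Set.uIcc a b := by
    rw [Set.uIcc_of_le hab]
    intro h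
    exact absurd h.1 (not_le.2 ha0)
  -- continuity facts
  have hfc : ContinuousOn (fun s : ℝ => (s - a) ^ d / s ^ (d + 1)) (Set.uIcc a b) := by
    apply ContinuousOn.div
    · exact (Continuous.continuousOn (by continuity))
    · exact (Continuous.continuousOn (by continuity))
    · intro x hx
      rw [Set.uIcc_of_le hab] at hx
      exact pow_ne_zero _ (ne_of_gt (lt_of_lt_of_le ha0 hx.1))
  have hgc : ContinuousOn (fun s : ℝ => 1/s - (d:ℝ)/(n:ℝ) * s ^ (-2:ℤ)) (Set.uIcc a b) := by
    have hne : ∀ x ∈ Set.uIcc a b, x ≠ 0 := by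
      intro x hx
      rw [Set.uIcc_of_le hab] at hx
      exact ne_of_gt (lt_of_lt_of_le ha0 hx.1)
    apply ContinuousOn.sub
    · exact ContinuousOn.div continuousOn_const continuousOn_id hne
    · exact ContinuousOn.mul continuousOn_const
        (ContinuousOn.zpow₀ continuousOn_id _ (fun x hx => Or.inl (hne x hx)))
  have hfint : IntervalIntegrable (fun s : ℝ => (s - a) ^ d / s ^ (d + 1)) volume a b :=
    hfc.intervalIntegrable
  have hgint : IntervalIntegrable (fun s : ℝ => 1/s - (d:ℝ)/(n:ℝ) * s ^ (-2:ℤ)) volume a b :=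
    hgc.intervalIntegrable
  have hgint1 : IntervalIntegrable (fun s : ℝ => 1/s) volume a b :=
    (ContinuousOn.div continuousOn_const continuousOn_id (fun x hx => by
      rw [Set.uIcc_of_le hab] at hx
      exact ne_of_gt (lt_of_lt_of_le ha0 hx.1))).intervalIntegrable
  have hgint2 : IntervalIntegrable (fun s : ℝ => (d:ℝ)/(n:ℝ) * s ^ (-2:ℤ)) volume a b :=
    (ContinuousOn.mul continuousOn_const
      (ContinuousOn.zpow₀ continuousOn_id _ (fun x hx => Or.inl (by
        rw [Set.uIcc_of_le hab] at hx
        exact ne_of_gt (lt_of_lt_of_le ha0 hx.1))))).intervalIntegrable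
  -- pointwise bound via Bernoulli's inequality
  have hpt : ∀ s ∈ Set.Icc a b,
      1/s - (d:ℝ)/(n:ℝ) * s ^ (-2:ℤ) ≤ (s - a) ^ d / s ^ (d + 1) := by
    intro s hs
    have hs0 : 0 < s := lt_of_lt_of_le ha0 hs.1
    have hns : (1:ℝ) ≤ (n:ℝ) * s := by
      have := hs.1
      rw [ha, div_le_iff₀ hn0] at this
      linarith [this]
    have hns0 : (0:ℝ) < (n:ℝ) * s := lt_of_lt_of_le one_pos hns
    have hbern := one_add_mul_le_pow
      (show (-2:ℝ) ≤ -(1/((n:ℝ)*s)) by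
        have : 1/((n:ℝ)*s) ≤ 1 := by
          rw [div_le_one hns0]; exact hns
        linarith) d
    have hkey : s - a = s * (1 + -(1/((n:ℝ)*s))) := by
      rw [ha]; field_simp; ring
    rw [hkey, mul_pow]
    have h1 : s ^ d * (1 + (d:ℝ) * -(1/((n:ℝ)*s))) ≤ s ^ d * (1 + -(1/((n:ℝ)*s))) ^ d :=
      mul_le_mul_of_nonneg_left hbern (pow_nonneg hs0.le d)
    have h2 : s ^ d * (1 + (d:ℝ) * -(1/((n:ℝ)*s))) / s ^ (d+1)
        ≤ s ^ d * (1 + -(1/((n:ℝ)*s))) ^ d / s ^ (d+1) :=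
      div_le_div_of_nonneg_right h1 (by positivity)
    refine le_trans (le_of_eq ?_) h2
    have hz : s ^ (-2:ℤ) = (s^2)⁻¹ := by
      rw [zpow_neg, zpow_two, pow_two]
    rw [hz]
    field_simp
    all_goals (try ring)
    all_goals norm_cast
  have hmono := intervalIntegral.integral_mono_on hab hgint hfint hpt
  refine le_trans ?_ hmono
  -- compute the integral of the minorant
  rw [intervalIntegral.integral_sub hgint1 hgint2, intervalIntegral.integral_const_mul,
    integral_one_div h0mem, integral_zpow (Or.inr ⟨by norm_num, h0mem⟩)]
  have e1 : Real.log (b / a) = Real.log b + Real.log n := by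
    rw [Real.log_div hb0.ne' ha0.ne', ha, one_div, Real.log_inv]
    ring
  have e2 : ((b:ℝ) ^ ((-2:ℤ) + 1) - a ^ ((-2:ℤ) + 1)) / (((-2:ℤ):ℝ) + 1)
      = (n:ℝ) - Real.sqrt d / 2 := by
    norm_num
    rw [ha, hb]
    rw [one_div, inv_inv]
    field_simp
    ring
  rw [e1, e2]
  have h3 : (d:ℝ)/(n:ℝ) * ((n:ℝ) - Real.sqrt d / 2) ≤ (d:ℝ) := by
    have e : (d:ℝ)/(n:ℝ) * ((n:ℝ) - Real.sqrt d / 2)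
        = (d:ℝ) - (d:ℝ) * Real.sqrt d / (2*(n:ℝ)) := by
      field_simp
    rw [e]
    have : 0 ≤ (d:ℝ) * Real.sqrt d / (2*(n:ℝ)) := by positivity
    linarith
  rw [hb]
  linarith

/-- Change of variables `r = (√d/2)s`. -/
lemma stmt16_aux_cov (d : ℕ) (hd : 1 ≤ d) (v : ℝ) (n : ℕ) (hn : Real.sqrt d / 2 < (n:ℝ)) :
    ∫ r in (Real.sqrt d / (2*(n:ℝ)))..1,
        v * (r - Real.sqrt d / (2*(n:ℝ))) ^ d / r ^ (d + 1)
      = v * ∫ s in (1/(n:ℝ))..(2 / Real.sqrt d), (s - 1/(n:ℝ)) ^ d / s ^ (d + 1) := by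
  have hd1 : (1:ℝ) ≤ Real.sqrt d := by
    rw [show (1:ℝ) = Real.sqrt 1 by simp]
    exact Real.sqrt_le_sqrt (by exact_mod_cast hd)
  have hds : (0:ℝ) < Real.sqrt d := lt_of_lt_of_le one_pos hd1
  have hn0 : (0:ℝ) < n := lt_of_le_of_lt (by positivity) hn
  set c : ℝ := Real.sqrt d / 2 with hc
  have hc0 : 0 < c := by positivity
  have hb1 : Real.sqrt d / (2*(n:ℝ)) = c * (1/(n:ℝ)) := by rw [hc]; field_simp
  have hb2 : (1:ℝ) = c * (2 / Real.sqrt d) := by rw [hc]; field_simp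
  have key := intervalIntegral.smul_integral_comp_mul_left
    (a := 1/(n:ℝ)) (b := 2 / Real.sqrt d)
    (fun r => v * (r - c * (1/(n:ℝ))) ^ d / r ^ (d + 1)) c
  rw [← hb2, ← hb1] at key
  calc ∫ r in (Real.sqrt d / (2*(n:ℝ)))..1,
        v * (r - Real.sqrt d / (2*(n:ℝ))) ^ d / r ^ (d + 1)
      = c • ∫ x in (1/(n:ℝ))..(2 / Real.sqrt d),
          v * (c * x - Real.sqrt d / (2*(n:ℝ))) ^ d / (c * x) ^ (d + 1) := key.symm
    _ = ∫ x in (1/(n:ℝ))..(2 / Real.sqrt d),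
          c * (v * (c * x - Real.sqrt d / (2*(n:ℝ))) ^ d / (c * x) ^ (d + 1)) := by
        rw [smul_eq_mul, ← intervalIntegral.integral_const_mul]
    _ = ∫ x in (1/(n:ℝ))..(2 / Real.sqrt d), v * ((x - 1/(n:ℝ)) ^ d / x ^ (d + 1)) := by
        congr 1
        funext x
        rw [hb1]
        have e : c * x - c * (1/(n:ℝ)) = c * (x - 1/(n:ℝ)) := by ring
        rw [e, mul_pow, mul_pow]
        rcases eq_or_ne x 0 with h | h
        · simp [h, hc0.ne']
        · field_simp
          ring
    _ = v * ∫ s in (1/(n:ℝ))..(2 / Real.sqrt d), (s - 1/(n:ℝ)) ^ d / s ^ (d + 1) := by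
        rw [intervalIntegral.integral_const_mul]

/-- Change of variables `r = (√d/2)s` for the ball-covering integral, and the
resulting bound `exp(-λ v_d ∫_{1/n}^{2/√d} (s-1/n)^d s^{-d-1} ds) ≤ C n^{-λ v_d}`. -/
theorem stmt16 (d : ℕ) (hd : 1 ≤ d) :
    (∀ n : ℕ, Real.sqrt d / 2 < (n:ℝ) →
      ∫ r in (Real.sqrt d / (2*(n:ℝ)))..1,
          (volume (Metric.ball (0 : EuclideanSpace ℝ (Fin d)) 1)).toReal *
            (r - Real.sqrt d / (2*(n:ℝ))) ^ d / r ^ (d + 1)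
        = (volume (Metric.ball (0 : EuclideanSpace ℝ (Fin d)) 1)).toReal *
            ∫ s in (1/(n:ℝ))..(2 / Real.sqrt d), (s - 1/(n:ℝ)) ^ d / s ^ (d + 1))
    ∧ ∀ lam : ℝ, 0 < lam → ∃ C : ℝ, 0 < C ∧ ∀ n : ℕ, Real.sqrt d / 2 < (n:ℝ) →
        Real.exp (-lam *
            ((volume (Metric.ball (0 : EuclideanSpace ℝ (Fin d)) 1)).toReal *
              ∫ s in (1/(n:ℝ))..(2 / Real.sqrt d), (s - 1/(n:ℝ)) ^ d / s ^ (d + 1)))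
          ≤ C * (n:ℝ) ^
              (-(lam * (volume (Metric.ball (0 : EuclideanSpace ℝ (Fin d)) 1)).toReal)) := by
  set v : ℝ := (volume (Metric.ball (0 : EuclideanSpace ℝ (Fin d)) 1)).toReal with hv
  have hv0 : 0 ≤ v := ENNReal.toReal_nonneg
  constructor
  · intro n hn
    exact stmt16_aux_cov d hd v n hn
  · intro lam hlam
    refine ⟨Real.exp (lam * v * ((d:ℝ) - Real.log (2 / Real.sqrt d))), Real.exp_pos _, ?_⟩
    intro n hn
    have hn0 : (0:ℝ) < n := lt_of_le_of_lt (by positivity) hn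
    have hI := stmt16_aux_lower d hd n hn
    have step1 : -lam * (v * ∫ s in (1/(n:ℝ))..(2 / Real.sqrt d),
          (s - 1/(n:ℝ)) ^ d / s ^ (d + 1))
        ≤ -lam * (v * (Real.log n - ((d:ℝ) - Real.log (2 / Real.sqrt d)))) := by
      have h1 : v * (Real.log n - ((d:ℝ) - Real.log (2 / Real.sqrt d)))
          ≤ v * ∫ s in (1/(n:ℝ))..(2 / Real.sqrt d), (s - 1/(n:ℝ)) ^ d / s ^ (d + 1) :=
        mul_le_mul_of_nonneg_left hI hv0
      nlinarith
    calc Real.exp (-lam * (v * ∫ s in (1/(n:ℝ))..(2 / Real.sqrt d),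
            (s - 1/(n:ℝ)) ^ d / s ^ (d + 1)))
        ≤ Real.exp (-lam * (v * (Real.log n - ((d:ℝ) - Real.log (2 / Real.sqrt d))))) :=
          Real.exp_le_exp.2 step1
      _ = Real.exp (lam * v * ((d:ℝ) - Real.log (2 / Real.sqrt d)))
            * Real.exp (Real.log n * (-(lam * v))) := by
          rw [← Real.exp_add]; ring_nf
      _ = Real.exp (lam * v * ((d:ℝ) - Real.log (2 / Real.sqrt d)))
            * (n:ℝ) ^ (-(lam * v)) := by
          rw [Real.rpow_def_of_pos hn0]
end
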